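/- Let B ≥ 2 be an integer and x ∈ [0,1]. (i) For every sequence (y_i)_{i≥0} of nonnegative integers such that ∑_{i=0}^∞ y_i/B^i = x and ∑_{i=0}^∞ i·y_i/B^i converges, one has H_B(x) ≤ ∑_{i=0}^∞ i·y_i/B^i. (ii) If moreover y_i ≤ B−1 for all i and y_i < B−1 for infinitely many i, then H_B(x) = ∑_{i=0}^∞ i·y_i/B^i. -/

import Mathlib

open scoped BigOperators

/-- `H_B(x) = ∑_{k=0}^∞ {B^k x}/B^k` where `{y}` is the fractional part. -/
noncomputable def HB (B : ℕ) (x : ℝ) : ℝ :=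
  ∑' k : ℕ, Int.fract ((B : ℝ) ^ k * x) / (B : ℝ) ^ k

lemma HB_key (B : ℕ) (hB : 2 ≤ B) (y : ℕ → ℕ)
    (hS : Summable (fun i : ℕ => (i : ℝ) * (y i : ℝ) / (B : ℝ) ^ i)) :
    (HB B (∑' i : ℕ, (y i : ℝ) / (B : ℝ) ^ i) ≤ ∑' i : ℕ, (i : ℝ) * (y i : ℝ) / (B : ℝ) ^ i) ∧
    ((∀ i, y i ≤ B - 1) → {i : ℕ | y i < B - 1}.Infinite →
      HB B (∑' i : ℕ, (y i : ℝ) / (B : ℝ) ^ i)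
        = ∑' i : ℕ, (i : ℝ) * (y i : ℝ) / (B : ℝ) ^ i) := by
  have hB2 : (2:ℝ) ≤ (B:ℝ) := by exact_mod_cast hB
  have hB1 : (1:ℝ) < (B:ℝ) := by linarith
  have hB0 : (0:ℝ) < (B:ℝ) := by linarith
  have hpow : ∀ k : ℕ, (0:ℝ) < (B:ℝ) ^ k := fun k => pow_pos hB0 k
  set c : ℕ → ℝ := fun i => (y i : ℝ) / (B : ℝ) ^ i with hc_def
  have hcnn : ∀ i, 0 ≤ c i := fun i => by positivity
  -- summability of c
  have hc : Summable c := by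
    rw [← summable_nat_add_iff 1]
    refine Summable.of_nonneg_of_le (fun i => hcnn _) (fun i => ?_)
      ((summable_nat_add_iff 1).2 hS)
    have h1 : (1:ℝ) ≤ ((i+1 : ℕ) : ℝ) := by exact_mod_cast Nat.succ_le_succ (Nat.zero_le i)
    have := hcnn (i+1)
    calc c (i+1) = 1 * (y (i+1) : ℝ) / (B:ℝ) ^ (i+1) := by simp [hc_def]
      _ ≤ ((i+1 : ℕ) : ℝ) * (y (i+1) : ℝ) / (B:ℝ) ^ (i+1) := by gcongr
  -- tails
  set S : ℕ → ℝ := fun k => ∑' j : ℕ, c (j + (k+1)) with hS_def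
  set t : ℕ → ℝ := fun k => ∑' j : ℕ, (y (j + (k+1)) : ℝ) / (B:ℝ) ^ (j+1) with ht_def
  have h4 : ∀ k j : ℕ, (B:ℝ) ^ k * c (j + (k+1)) = (y (j + (k+1)) : ℝ) / (B:ℝ) ^ (j+1) := by
    intro k j
    have hpe : (B:ℝ) ^ (j + (k+1)) = (B:ℝ) ^ (j+1) * (B:ℝ) ^ k := by
      rw [← pow_add]; congr 1; omega
    simp only [hc_def, hpe]
    field_simp
  have htS : ∀ k, t k = (B:ℝ) ^ k * S k := by
    intro k
    rw [ht_def, hS_def]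
    rw [← tsum_mul_left]
    exact tsum_congr fun j => (h4 k j).symm
  have htnn : ∀ k, 0 ≤ t k := fun k =>
    tsum_nonneg fun j => by positivity
  -- summability of tails
  have hshift : ∀ k : ℕ, Summable fun j => c (j + k) := fun k => (summable_nat_add_iff k).2 hc
  have htsummand : ∀ k : ℕ, Summable fun j : ℕ => (y (j + (k+1)) : ℝ) / (B:ℝ) ^ (j+1) := by
    intro k
    refine ((hshift (k+1)).mul_left ((B:ℝ)^k)).congr fun j => h4 k j
  -- fract identity
  have hfr : ∀ k : ℕ, Int.fract ((B:ℝ) ^ k * ∑' i, c i) = Int.fract (t k) := by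
    intro k
    have h1 : (B:ℝ) ^ k * ∑' i, c i = ∑' i, (B:ℝ) ^ k * c i := tsum_mul_left.symm
    have h2 : (∑ i ∈ Finset.range (k+1), (B:ℝ) ^ k * c i)
        + ∑' j, (B:ℝ) ^ k * c (j + (k+1)) = ∑' i, (B:ℝ) ^ k * c i :=
      Summable.sum_add_tsum_nat_add (k+1) (hc.mul_left _)
    have h3 : (∑ i ∈ Finset.range (k+1), (B:ℝ) ^ k * c i)
        = (((∑ i ∈ Finset.range (k+1), y i * B ^ (k-i) : ℕ) : ℤ) : ℝ) := by
      push_cast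
      refine Finset.sum_congr rfl fun i hi => ?_
      have hik : i ≤ k := Nat.lt_succ_iff.mp (Finset.mem_range.mp hi)
      have hpe : (B:ℝ) ^ k = (B:ℝ) ^ i * (B:ℝ) ^ (k-i) := by
        rw [← pow_add]; congr 1; omega
      simp only [hc_def, hpe]
      field_simp
    have h5 : (∑' j, (B:ℝ) ^ k * c (j + (k+1))) = t k := by
      rw [ht_def]; exact tsum_congr fun j => h4 k j
    rw [h1, ← h2, h3, h5, Int.fract_intCast_add]
  -- the double-sum function
  set g : ℕ × ℕ → ℝ := fun p => if p.2 < p.1 then c p.1 else 0 with hg_def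
  have hgnn : ∀ p, 0 ≤ g p := fun p => by
    by_cases h : p.2 < p.1 <;> simp [hg_def, h, hcnn]
  have hrowzero : ∀ i : ℕ, ∀ k ∉ Finset.range i, g (i, k) = 0 := by
    intro i k hk
    simp only [Finset.mem_range, not_lt] at hk
    simp [hg_def, not_lt.2 hk]
  have hrow : ∀ i : ℕ, (∑' k, g (i, k)) = (i : ℝ) * (y i : ℝ) / (B:ℝ) ^ i := by
    intro i
    rw [tsum_eq_sum (hrowzero i)]
    have : ∀ k ∈ Finset.range i, g (i, k) = c i := fun k hk => by
      simp [hg_def, Finset.mem_range.mp hk]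
    rw [Finset.sum_congr rfl this, Finset.sum_const, Finset.card_range, nsmul_eq_mul,
      hc_def, mul_div_assoc]
  have hrowsummable : ∀ i, Summable fun k => g (i, k) := fun i =>
    summable_of_ne_finset_zero (hrowzero i)
  have hg : Summable g := by
    refine (summable_prod_of_nonneg hgnn).2 ⟨hrowsummable, ?_⟩
    refine hS.congr fun i => (hrow i).symm
  have hcolsum : ∀ k, (∑' i, g (i, k)) = S k := by
    intro k
    have hsum : Summable (fun i => g (i, k)) := hg.prod_symm.prod_factor k
    have h0 : ∑ i ∈ Finset.range (k+1), g (i, k) = 0 :=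
      Finset.sum_eq_zero fun i hi => by
        have : i ≤ k := Nat.lt_succ_iff.mp (Finset.mem_range.mp hi)
        simp [hg_def, not_lt.2 this]
    have h1 : ∀ j : ℕ, g (j + (k+1), k) = c (j + (k+1)) := fun j => by
      simp only [hg_def]
      rw [if_pos (by omega)]
    rw [hS_def, ← Summable.sum_add_tsum_nat_add (k+1) hsum, h0, zero_add]
    exact tsum_congr h1
  have hswap : Summable (fun p : ℕ × ℕ => g (p.2, p.1)) := hg.prod_symm
  have hScol : Summable S := by
    have := ((summable_prod_of_nonneg (fun p => hgnn (p.2, p.1))).1 hswap).2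
    exact this.congr fun k => hcolsum k
  have hdouble : (∑' k, S k) = ∑' i : ℕ, (i : ℝ) * (y i : ℝ) / (B:ℝ) ^ i := by
    have hcomm : (∑' (k) (i), g (i, k)) = ∑' (i) (k), g (i, k) :=
      Summable.tsum_comm (f := fun i k => g (i, k)) hg
    calc (∑' k, S k) = ∑' (k) (i), g (i, k) := tsum_congr fun k => (hcolsum k).symm
      _ = ∑' (i) (k), g (i, k) := hcomm
      _ = ∑' i : ℕ, (i : ℝ) * (y i : ℝ) / (B:ℝ) ^ i := tsum_congr fun i => hrow i
  -- bound on each term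
  have hfrac_le : ∀ k, Int.fract ((B:ℝ) ^ k * ∑' i, c i) / (B:ℝ) ^ k ≤ S k := by
    intro k
    rw [hfr k]
    have hfl : (0:ℝ) ≤ (⌊t k⌋ : ℝ) := by exact_mod_cast Int.floor_nonneg.2 (htnn k)
    have h5 : Int.fract (t k) ≤ t k := by
      rw [Int.fract]; linarith
    calc Int.fract (t k) / (B:ℝ) ^ k ≤ t k / (B:ℝ) ^ k := by gcongr
      _ = S k := by rw [htS k, mul_div_cancel_left₀ _ (hpow k).ne']
  have hHBs : Summable (fun k => Int.fract ((B:ℝ) ^ k * ∑' i, c i) / (B:ℝ) ^ k) := by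
    refine Summable.of_nonneg_of_le
      (fun k => div_nonneg (Int.fract_nonneg _) (hpow k).le) (fun k => ?_)
      (summable_geometric_of_lt_one (by positivity) (inv_lt_one_of_one_lt₀ hB1))
    have h1 : Int.fract ((B:ℝ) ^ k * ∑' i, c i) ≤ 1 := (Int.fract_lt_one _).le
    calc Int.fract ((B:ℝ) ^ k * ∑' i, c i) / (B:ℝ) ^ k ≤ 1 / (B:ℝ) ^ k := by gcongr
      _ = ((B:ℝ)⁻¹) ^ k := by rw [one_div, inv_pow]
  constructor
  · -- part (i)
    rw [← hdouble]
    exact Summable.tsum_le_tsum hfrac_le hHBs hScol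
  · -- part (ii)
    intro hle hinf
    have hb1n : 1 ≤ B := by omega
    have hfr_eq : ∀ k, Int.fract (t k) = t k := by
      intro k
      refine Int.fract_eq_self.2 ⟨htnn k, ?_⟩
      have hr0 : (0:ℝ) ≤ (B:ℝ)⁻¹ := by positivity
      have hr1 : (B:ℝ)⁻¹ < 1 := inv_lt_one_of_one_lt₀ hB1
      have hgeos : Summable (fun j : ℕ => ((B:ℝ)⁻¹) ^ j) := summable_geometric_of_lt_one hr0 hr1
      have hterm : ∀ j : ℕ, ((B:ℝ) - 1) / (B:ℝ) ^ (j+1)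
          = (((B:ℝ) - 1) * (B:ℝ)⁻¹) * ((B:ℝ)⁻¹) ^ j := by
        intro j
        rw [pow_succ]
        field_simp
        rw [one_div, inv_pow, mul_assoc, mul_inv_cancel₀ (hpow j).ne', mul_one]
      have hbsum : Summable (fun j : ℕ => ((B:ℝ) - 1) / (B:ℝ) ^ (j+1)) :=
        (hgeos.mul_left _).congr fun j => (hterm j).symm
      have hone : (∑' j : ℕ, ((B:ℝ) - 1) / (B:ℝ) ^ (j+1)) = 1 := by
        have h1B : (1:ℝ) - (B:ℝ)⁻¹ ≠ 0 := by
          have : (B:ℝ)⁻¹ < 1 := hr1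
          intro h; rw [sub_eq_zero] at h; exact this.ne' h
        calc (∑' j : ℕ, ((B:ℝ) - 1) / (B:ℝ) ^ (j+1))
            = ∑' j : ℕ, (((B:ℝ) - 1) * (B:ℝ)⁻¹) * ((B:ℝ)⁻¹) ^ j := tsum_congr hterm
          _ = (((B:ℝ) - 1) * (B:ℝ)⁻¹) * (1 - (B:ℝ)⁻¹)⁻¹ := by
              rw [tsum_mul_left, tsum_geometric_of_lt_one hr0 hr1]
          _ = 1 := by
              field_simp
              exact div_self (sub_ne_zero.2 hB1.ne')
      rw [ht_def, ← hone]
      obtain ⟨i0, hi0mem, hi0gt⟩ := hinf.exists_gt k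
      have hi0 : y i0 < B - 1 := hi0mem
      set j0 := i0 - (k+1) with hj0
      have hidx : j0 + (k+1) = i0 := by omega
      have hcast : ((B - 1 : ℕ) : ℝ) = (B:ℝ) - 1 := by
        push_cast [hb1n]; ring
      refine Summable.tsum_lt_tsum_of_nonneg (i := j0) (fun j => by positivity) (fun j => ?_) ?_ hbsum
      · have := hle (j + (k+1))
        have hy : ((y (j + (k+1)) : ℕ) : ℝ) ≤ (B:ℝ) - 1 := by
          rw [← hcast]; exact_mod_cast this
        gcongr
      · have hy : ((y (j0 + (k+1)) : ℕ) : ℝ) < (B:ℝ) - 1 := by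
          rw [← hcast, hidx]; exact_mod_cast hi0
        exact (div_lt_div_iff_of_pos_right (hpow (j0+1))).2 hy
    have hterm_eq : ∀ k, Int.fract ((B:ℝ) ^ k * ∑' i, c i) / (B:ℝ) ^ k = S k := by
      intro k
      rw [hfr k, hfr_eq k, htS k, mul_div_cancel_left₀ _ (hpow k).ne']
    calc HB B (∑' i, c i) = ∑' k, S k := tsum_congr hterm_eq
      _ = _ := hdouble

theorem stmt14 (B : ℕ) (hB : 2 ≤ B) (x : ℝ) (hx : x ∈ Set.Icc (0 : ℝ) 1) :
    (∀ y : ℕ → ℕ, (∑' i : ℕ, (y i : ℝ) / (B : ℝ) ^ i) = x →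
      Summable (fun i : ℕ => (i : ℝ) * (y i : ℝ) / (B : ℝ) ^ i) →
      HB B x ≤ ∑' i : ℕ, (i : ℝ) * (y i : ℝ) / (B : ℝ) ^ i) ∧
    (∀ y : ℕ → ℕ, (∑' i : ℕ, (y i : ℝ) / (B : ℝ) ^ i) = x →
      Summable (fun i : ℕ => (i : ℝ) * (y i : ℝ) / (B : ℝ) ^ i) →
      (∀ i, y i ≤ B - 1) → {i : ℕ | y i < B - 1}.Infinite →
      HB B x = ∑' i : ℕ, (i : ℝ) * (y i : ℝ) / (B : ℝ) ^ i) := by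
  constructor
  · intro y hxy hS
    subst hxy
    exact (HB_key B hB y hS).1
  · intro y hxy hS hle hinf
    subst hxy
    exact (HB_key B hB y hS).2 hle hinf
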